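/- For all integers n ≥ 0, 5·w_{2n} = 5 + (3 + 6n)·F_{2n} + 8n·F_{2n+1}. -/
import Mathlib


theorem stmt_14 (r R1 R2 w : ℕ → ℕ)
    (hr : ∀ n : ℕ, 2 ≤ n → r n = r (n - 1) + r (n - 2))
    (hR1 : ∀ n : ℕ, 2 ≤ n → R1 n = R1 (n - 2) + r n)
    (hR2 : ∀ n : ℕ, 2 ≤ n → R2 n = R2 (n - 1) + R2 (n - 2) + R1 (n - 2) + r n)
    (hr0 : r 0 = 1) (hr1 : r 1 = 1)
    (hR10 : R1 0 = 1) (hR11 : R1 1 = 1)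
    (hR20 : R2 0 = 1) (hR21 : R2 1 = 2)
    (hw : ∀ n : ℕ, w n = R2 n) :
    ∀ n : ℕ, 5 * w (2 * n) = 5 + (3 + 6 * n) * Nat.fib (2 * n) + 8 * n * Nat.fib (2 * n + 1) := by
  have key : ∀ n : ℕ,
      (r (2*n) : ℤ) = Nat.fib (2*n+1) ∧
      (r (2*n+1) : ℤ) = Nat.fib (2*n+2) ∧
      (R1 (2*n) : ℤ) = Nat.fib (2*n+2) ∧
      (R1 (2*n+1) : ℤ) = Nat.fib (2*n+3) - 1 ∧
      5 * (R2 (2*n) : ℤ) = 5 + (3 + 6*n) * Nat.fib (2*n) + 8*n * Nat.fib (2*n+1) ∧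
      5 * (R2 (2*n+1) : ℤ) = (6 + 6*n) * Nat.fib (2*n+1) + (4 + 8*n) * Nat.fib (2*n+2) := by
    intro n
    induction n with
    | zero =>
      norm_num [hr0, hr1, hR10, hR11, hR20, hR21]
    | succ n ih =>
      obtain ⟨ih1, ih2, ih3, ih4, ih5, ih6⟩ := ih
      -- cast recurrences
      have hr2 : (r (2*n+2) : ℤ) = r (2*n+1) + r (2*n) := by
        have h := hr (2*n+2) (by omega)
        rw [show 2*n+2-1 = 2*n+1 by omega, show 2*n+2-2 = 2*n by omega] at h
        exact_mod_cast h
      have hr3 : (r (2*n+3) : ℤ) = r (2*n+2) + r (2*n+1) := by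
        have h := hr (2*n+3) (by omega)
        rw [show 2*n+3-1 = 2*n+2 by omega, show 2*n+3-2 = 2*n+1 by omega] at h
        exact_mod_cast h
      have hq2 : (R1 (2*n+2) : ℤ) = R1 (2*n) + r (2*n+2) := by
        have h := hR1 (2*n+2) (by omega)
        rw [show 2*n+2-2 = 2*n by omega] at h
        exact_mod_cast h
      have hq3 : (R1 (2*n+3) : ℤ) = R1 (2*n+1) + r (2*n+3) := by
        have h := hR1 (2*n+3) (by omega)
        rw [show 2*n+3-2 = 2*n+1 by omega] at h
        exact_mod_cast h
      have hs2 : (R2 (2*n+2) : ℤ) = R2 (2*n+1) + R2 (2*n) + R1 (2*n) + r (2*n+2) := by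
        have h := hR2 (2*n+2) (by omega)
        rw [show 2*n+2-1 = 2*n+1 by omega, show 2*n+2-2 = 2*n by omega] at h
        exact_mod_cast h
      have hs3 : (R2 (2*n+3) : ℤ) = R2 (2*n+2) + R2 (2*n+1) + R1 (2*n+1) + r (2*n+3) := by
        have h := hR2 (2*n+3) (by omega)
        rw [show 2*n+3-1 = 2*n+2 by omega, show 2*n+3-2 = 2*n+1 by omega] at h
        exact_mod_cast h
      -- fib recurrences
      have e2 : (Nat.fib (2*n+2) : ℤ) = Nat.fib (2*n) + Nat.fib (2*n+1) := by
        have := Nat.fib_add_two (n := 2*n); exact_mod_cast this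
      have e3 : (Nat.fib (2*n+3) : ℤ) = Nat.fib (2*n+1) + Nat.fib (2*n+2) := by
        have h := Nat.fib_add_two (n := 2*n+1)
        rw [show 2*n+1+2 = 2*n+3 by omega, show 2*n+1+1 = 2*n+2 by omega] at h
        exact_mod_cast h
      have e4 : (Nat.fib (2*n+4) : ℤ) = Nat.fib (2*n+2) + Nat.fib (2*n+3) := by
        have h := Nat.fib_add_two (n := 2*n+2)
        rw [show 2*n+2+2 = 2*n+4 by omega, show 2*n+2+1 = 2*n+3 by omega] at h
        exact_mod_cast h
      have e5 : (Nat.fib (2*n+5) : ℤ) = Nat.fib (2*n+3) + Nat.fib (2*n+4) := by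
        have h := Nat.fib_add_two (n := 2*n+3)
        rw [show 2*n+3+2 = 2*n+5 by omega, show 2*n+3+1 = 2*n+4 by omega] at h
        exact_mod_cast h
      have g1 : (r (2*n+2) : ℤ) = Nat.fib (2*n+3) := by
        linear_combination hr2 + ih2 + ih1 - e3
      have g2 : (r (2*n+3) : ℤ) = Nat.fib (2*n+4) := by
        linear_combination hr3 + g1 + ih2 - e4
      have g3 : (R1 (2*n+2) : ℤ) = Nat.fib (2*n+4) := by
        linear_combination hq2 + ih3 + g1 - e4
      have g4 : (R1 (2*n+3) : ℤ) = Nat.fib (2*n+5) - 1 := by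
        linear_combination hq3 + ih4 + g2 - e5
      have g5 : 5 * (R2 (2*n+2) : ℤ) = 5 + (9 + 6*n) * Nat.fib (2*n+2) + (8 + 8*n) * Nat.fib (2*n+3) := by
        linear_combination 5*hs2 + ih6 + ih5 + 5*ih3 + 5*g1 - (6*(n:ℤ)+3)*e2 - (8*(n:ℤ)+3)*e3
      have g6 : 5 * (R2 (2*n+3) : ℤ) = (12 + 6*n) * Nat.fib (2*n+3) + (12 + 8*n) * Nat.fib (2*n+4) := by
        linear_combination 5*hs3 + g5 + ih6 + 5*ih4 + 5*g2 - (6*(n:ℤ)+6)*e3 - (8*(n:ℤ)+7)*e4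
      rw [show 2*(n+1) = 2*n+2 by omega, show 2*n+2+1 = 2*n+3 by omega,
          show 2*n+2+2 = 2*n+4 by omega, show 2*n+2+3 = 2*n+5 by omega]
      push_cast
      refine ⟨g1, g2, g3, g4, ?_, ?_⟩
      · linear_combination g5
      · linear_combination g6
  intro n
  have h := (key n).2.2.2.2.1
  rw [hw]
  have hgoal : (5 * (R2 (2*n)) : ℤ) = 5 + (3 + 6*n) * Nat.fib (2*n) + 8*n * Nat.fib (2*n+1) := by
    push_cast
    linear_combination h
  exact_mod_cast hgoal
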